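/- If n > d and P ∈ ℝ^{d×n} has ℚ-linearly independent columns, then for any s > 0 there is no constant C > 0 such that ‖U‖_{L²} ≤ C·(∑_{k≠0} |Pk|^{2s} |Û_k|²)^{1/2} holds for all zero-mean U ∈ H^∞(𝕋ⁿ); i.e., the space H̄_{P,0}^s(𝕋ⁿ) does not embed continuously into L²₀(𝕋ⁿ). In fact, the exponentials U_j(y) = exp(i k_j·y) with |P k_j| → 0 satisfy ‖U_j‖_{L²} = 1 while ‖U_j‖_{H̄_{P,0}^s} → 0. -/
import Mathlib


/-- The projected lattice vector `P k ∈ ℝ^d` (as a point of Euclidean space). -/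
noncomputable def projVec {d n : ℕ} (P : Matrix (Fin d) (Fin n) ℝ) (k : Fin n → ℤ) :
    EuclideanSpace ℝ (Fin d) :=
  (EuclideanSpace.equiv (Fin d) ℝ).symm (P.mulVec fun j => (k j : ℝ))

/-- The columns of `P` are linearly independent over `ℚ`. -/
def QLinIndep {d n : ℕ} (P : Matrix (Fin d) (Fin n) ℝ) : Prop :=
  ∀ μ : Fin n → ℚ, (∀ i, ∑ j, P i j * (μ j : ℝ) = 0) → μ = 0

lemma projVec_sub {d n : ℕ} (P : Matrix (Fin d) (Fin n) ℝ) (k1 k2 : Fin n → ℤ) :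
    projVec P (k1 - k2) = projVec P k1 - projVec P k2 := by
  unfold projVec
  have : (fun j => (((k1 - k2) j : ℤ) : ℝ)) = (fun j => ((k1 j : ℤ) : ℝ)) - fun j => ((k2 j : ℤ) : ℝ) := by
    funext j; simp only [Pi.sub_apply]; push_cast; ring
  rw [this, Matrix.mulVec_sub, map_sub]

lemma exists_small {d n : ℕ} (hdn : d < n) (P : Matrix (Fin d) (Fin n) ℝ) :
    ∀ ε > 0, ∃ k : Fin n → ℤ, k ≠ 0 ∧ ‖projVec P k‖ < ε := by
  intro ε hε
  classical
  let g : (Fin n → ℝ) →L[ℝ] EuclideanSpace ℝ (Fin d) :=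
    LinearMap.toContinuousLinearMap
      (((EuclideanSpace.equiv (Fin d) ℝ).symm.toLinearEquiv.toLinearMap).comp P.mulVecLin)
  have hg : ∀ k : Fin n → ℤ, projVec P k = g (fun j => (k j : ℝ)) := fun k => rfl
  -- kernel is nontrivial
  have hni : ¬ Function.Injective g := by
    intro h
    have h2 := LinearMap.finrank_le_finrank_of_injective
      (f := (g : (Fin n → ℝ) →L[ℝ] EuclideanSpace ℝ (Fin d)).toLinearMap) h
    simp [Module.finrank_pi, finrank_euclideanSpace_fin] at h2
    omega
  obtain ⟨v, hgv, hv0⟩ : ∃ v : Fin n → ℝ, g v = 0 ∧ v ≠ 0 := by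
    rw [Function.Injective] at hni
    push_neg at hni
    obtain ⟨x, y, hxy, hne⟩ := hni
    exact ⟨x - y, by rw [map_sub, hxy, sub_self], sub_ne_zero.2 hne⟩
  obtain ⟨i, hi⟩ : ∃ i, v i ≠ 0 := by
    by_contra h; push_neg at h; exact hv0 (funext h)
  set M := ‖g‖ * (1 / 2) with hM
  have hM0 : 0 ≤ M := by positivity
  set K : ℕ → Fin n → ℤ := fun N j => round ((N : ℝ) * v j) with hK
  have hKb : ∀ N, ‖projVec P (K N)‖ ≤ M := by
    intro N
    have h1 : g (fun j => ((K N j : ℝ))) = g ((fun j => ((K N j : ℝ))) - (N : ℝ) • v) := by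
      rw [map_sub, map_smul, hgv, smul_zero, sub_zero]
    rw [hg, h1]
    calc ‖g ((fun j => ((K N j : ℝ))) - (N : ℝ) • v)‖
        ≤ ‖g‖ * ‖(fun j => ((K N j : ℝ))) - (N : ℝ) • v‖ := g.le_opNorm _
      _ ≤ M := by
          rw [hM]
          gcongr
          rw [pi_norm_le_iff_of_nonneg (by norm_num)]
          intro j
          have := abs_sub_round ((N : ℝ) * v j)
          simp only [Pi.sub_apply, Pi.smul_apply, smul_eq_mul, Real.norm_eq_abs, hK]
          rw [abs_sub_comm]
          exact this
  have hinf : (Set.range K).Infinite := by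
    intro hfin
    have hfin2 : (Set.range fun N => |((K N i : ℤ) : ℝ)|).Finite := by
      have : (Set.range fun N => |((K N i : ℤ) : ℝ)|) ⊆
          (fun k : Fin n → ℤ => |((k i : ℤ) : ℝ)|) '' Set.range K := by
        rintro x ⟨N, rfl⟩; exact ⟨K N, ⟨N, rfl⟩, rfl⟩
      exact (hfin.image _).subset this
    obtain ⟨B, hB⟩ := hfin2.bddAbove
    obtain ⟨N, hN⟩ := exists_nat_gt ((B + 1/2) / |v i|)
    have hvi : (0:ℝ) < |v i| := abs_pos.2 hi
    have hN2 : B + 1/2 < (N : ℝ) * |v i| := by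
      rw [div_lt_iff₀ hvi] at hN; linarith
    have hlow : (N : ℝ) * |v i| - 1/2 ≤ |((K N i : ℤ) : ℝ)| := by
      have h1 : |(N : ℝ) * v i| - |((N : ℝ) * v i) - ((K N i : ℤ) : ℝ)| ≤ |((K N i : ℤ) : ℝ)| := by
        have := abs_sub_abs_le_abs_sub ((N : ℝ) * v i) (((K N i : ℤ) : ℝ))
        linarith [this]
      have h2 : |((N : ℝ) * v i) - ((K N i : ℤ) : ℝ)| ≤ 1/2 := abs_sub_round _
      rw [abs_mul, abs_of_nonneg (by positivity : (0:ℝ) ≤ (N:ℝ))] at h1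
      linarith
    have := hB ⟨N, rfl⟩
    linarith
  -- pigeonhole
  by_contra hcon
  push_neg at hcon
  have htb : TotallyBounded (Metric.closedBall (0 : EuclideanSpace ℝ (Fin d)) M) :=
    (isCompact_closedBall _ _).totallyBounded
  obtain ⟨t, htf, htc⟩ := Metric.totallyBounded_iff.1 htb (ε/2) (by linarith)
  set c : (Fin n → ℤ) → EuclideanSpace ℝ (Fin d) := fun k =>
    if h : ∃ y ∈ t, projVec P k ∈ Metric.ball y (ε/2) then h.choose else 0 with hc
  have hmem : ∀ k ∈ Set.range K, ∃ y ∈ t, projVec P k ∈ Metric.ball y (ε/2) := by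
    rintro k ⟨N, rfl⟩
    have : projVec P (K N) ∈ Metric.closedBall (0 : EuclideanSpace ℝ (Fin d)) M := by
      rw [Metric.mem_closedBall, dist_zero_right]; exact hKb N
    have := htc this
    simpa using this
  have hmaps : Set.MapsTo c (Set.range K) t := by
    intro k hk
    have h := hmem k hk
    rw [hc]; simp only [dif_pos h]
    exact h.choose_spec.1
  obtain ⟨k1, hk1, k2, hk2, hne, heq⟩ := hinf.exists_ne_map_eq_of_mapsTo hmaps htf
  have hb1 : projVec P k1 ∈ Metric.ball (c k1) (ε/2) := by
    have h := hmem k1 hk1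
    rw [hc]; simp only [dif_pos h]; exact h.choose_spec.2
  have hb2 : projVec P k2 ∈ Metric.ball (c k1) (ε/2) := by
    have h := hmem k2 hk2
    rw [heq, hc]; simp only [dif_pos h]; exact h.choose_spec.2
  have hd : dist (projVec P k1) (projVec P k2) < ε := by
    have := Metric.mem_ball.1 hb1
    have := Metric.mem_ball.1 hb2
    calc dist (projVec P k1) (projVec P k2)
        ≤ dist (projVec P k1) (c k1) + dist (projVec P k2) (c k1) := dist_triangle_right _ _ _
      _ < ε/2 + ε/2 := by gcongr <;> assumption
      _ = ε := by ring
  have hsub : ‖projVec P (k1 - k2)‖ < ε := by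
    rw [projVec_sub, ← dist_eq_norm]; exact hd
  exact absurd hsub (not_lt.2 (hcon _ (sub_ne_zero.2 hne)))

lemma norm_tsum_ind {n : ℕ} (k0 : Fin n → ℤ) :
    Real.sqrt (∑' k, ‖(if k = k0 then (1 : ℂ) else 0)‖ ^ 2) = 1 := by
  classical
  have h : (fun k : Fin n → ℤ => ‖(if k = k0 then (1 : ℂ) else 0)‖ ^ 2)
      = fun k => if k = k0 then (1 : ℝ) else 0 := by
    funext k; by_cases h : k = k0 <;> simp [h]
  rw [h, tsum_ite_eq, Real.sqrt_one]

lemma wt_tsum_ind {d n : ℕ} (P : Matrix (Fin d) (Fin n) ℝ) (s : ℝ) (hs : 0 < s)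
    (k0 : Fin n → ℤ) :
    Real.sqrt (∑' k, ‖projVec P k‖ ^ (2 * s) * ‖(if k = k0 then (1 : ℂ) else 0)‖ ^ 2)
      = ‖projVec P k0‖ ^ s := by
  classical
  have h : (fun k : Fin n → ℤ => ‖projVec P k‖ ^ (2 * s) * ‖(if k = k0 then (1 : ℂ) else 0)‖ ^ 2)
      = fun k => if k = k0 then ‖projVec P k0‖ ^ (2 * s) else 0 := by
    funext k; by_cases h : k = k0 <;> simp [h]
  rw [h, tsum_ite_eq, Real.sqrt_eq_rpow, ← Real.rpow_mul (norm_nonneg _)]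
  congr 1; ring

/-- For `n > d` and `s > 0` there is no continuous embedding of `H̄_{P,0}^s(𝕋ⁿ)` into
`L²₀(𝕋ⁿ)` (functions represented by their Fourier coefficients; trigonometric
polynomials, i.e. finitely supported coefficient sequences, already witness the
failure).  Moreover, the exponentials `U_j = e^{i k_j·y}` with `|P k_j| → 0` have
`‖U_j‖_{L²} = 1` while `‖U_j‖_{H̄_{P,0}^s} → 0`. -/
theorem stmt2 {d n : ℕ} (hdn : d < n) (P : Matrix (Fin d) (Fin n) ℝ)
    (hP : QLinIndep P) (s : ℝ) (hs : 0 < s) :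
    (¬ ∃ C : ℝ, 0 < C ∧ ∀ U : (Fin n → ℤ) → ℂ, U 0 = 0 → (Function.support U).Finite →
        Real.sqrt (∑' k, ‖U k‖ ^ 2) ≤
          C * Real.sqrt (∑' k, ‖projVec P k‖ ^ (2 * s) * ‖U k‖ ^ 2)) ∧
    ∃ kseq : ℕ → (Fin n → ℤ),
      (∀ j, kseq j ≠ 0) ∧
      (∀ j, Real.sqrt (∑' k, ‖(if k = kseq j then (1 : ℂ) else 0)‖ ^ 2) = 1) ∧
      Filter.Tendsto
        (fun j => Real.sqrt
          (∑' k, ‖projVec P k‖ ^ (2 * s) * ‖(if k = kseq j then (1 : ℂ) else 0)‖ ^ 2))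
        Filter.atTop (nhds 0) := by
  classical
  have hA := exists_small hdn P
  choose k hk1 hk2 using fun j : ℕ => hA (1 / ((j : ℝ) + 1)) (by positivity)
  have htend0 : Filter.Tendsto (fun j => ‖projVec P (k j)‖) Filter.atTop (nhds 0) :=
    squeeze_zero (fun j => norm_nonneg _) (fun j => (hk2 j).le)
      tendsto_one_div_add_atTop_nhds_zero_nat
  have htend : Filter.Tendsto (fun j => ‖projVec P (k j)‖ ^ s) Filter.atTop (nhds 0) := by
    have h := htend0.rpow_const (Or.inr hs.le)
    rwa [Real.zero_rpow hs.ne'] at h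
  constructor
  · rintro ⟨C, hC, h⟩
    have hmul : Filter.Tendsto (fun j => C * ‖projVec P (k j)‖ ^ s) Filter.atTop (nhds 0) := by
      have := htend.const_mul C
      simpa using this
    obtain ⟨j, hj⟩ := (hmul.eventually (gt_mem_nhds one_pos)).exists
    have hU := h (fun k' => if k' = k j then 1 else 0)
      (if_neg (fun hh => hk1 j hh.symm))
      ((Set.finite_singleton (k j)).subset
        (Function.support_subset_iff'.mpr fun x hx => if_neg (by simpa using hx)))
    rw [norm_tsum_ind, wt_tsum_ind P s hs] at hU
    linarith
  · refine ⟨k, hk1, fun j => norm_tsum_ind _, ?_⟩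
    have heq : (fun j => Real.sqrt
        (∑' k', ‖projVec P k'‖ ^ (2 * s) * ‖(if k' = k j then (1 : ℂ) else 0)‖ ^ 2))
        = fun j => ‖projVec P (k j)‖ ^ s := funext fun j => wt_tsum_ind P s hs _
    rw [heq]; exact htend
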